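/- Let c, T, I ≥ 0 and let p, q, x, y : ℕ×ℕ → ℝ be double sequences such that |p_i^0 − x_i^0| ≤ I and |q_0^j − y_0^j| ≤ I for all i, j, and such that for all i, j ≥ 0 both |p_i^{j+1} − x_i^{j+1}| and |q_{i+1}^j − y_{i+1}^j| are ≤ c·max(|q_i^j − y_i^j|, |p_i^j − x_i^j|) + T. Then for all i, j ≥ 0: |p_i^{j+1} − x_i^{j+1}| ≤ P_{i+j}(c)·T + c̃^{i+j+1}·I and |q_{i+1}^j − y_{i+1}^j| ≤ P_{i+j}(c)·T + c̃^{i+j+1}·I. In particular, if the initial values agree (I = 0) these quantities are ≤ P_{i+j}(c)·T, and if c < 1 they are uniformly bounded. -/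

import Mathlib

/-- basic estimate for double sequences (Mealy case).
`P_{i+j}(c) = ∑_{k=0}^{i+j} c^k` and `c̃ = max c 1`. -/
theorem statement5 (c T I : ℝ) (hc : 0 ≤ c) (hT : 0 ≤ T) (hI : 0 ≤ I)
    (p q x y : ℕ → ℕ → ℝ)
    (hp0 : ∀ i : ℕ, |p i 0 - x i 0| ≤ I) (hq0 : ∀ j : ℕ, |q 0 j - y 0 j| ≤ I)
    (hp : ∀ i j : ℕ, |p i (j + 1) - x i (j + 1)|
        ≤ c * max (|q i j - y i j|) (|p i j - x i j|) + T)
    (hq : ∀ i j : ℕ, |q (i + 1) j - y (i + 1) j|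
        ≤ c * max (|q i j - y i j|) (|p i j - x i j|) + T) :
    (∀ i j : ℕ,
      |p i (j + 1) - x i (j + 1)|
          ≤ (∑ k ∈ Finset.range (i + j + 1), c ^ k) * T + (max c 1) ^ (i + j + 1) * I ∧
      |q (i + 1) j - y (i + 1) j|
          ≤ (∑ k ∈ Finset.range (i + j + 1), c ^ k) * T + (max c 1) ^ (i + j + 1) * I) ∧
    (I = 0 → ∀ i j : ℕ,
      |p i (j + 1) - x i (j + 1)| ≤ (∑ k ∈ Finset.range (i + j + 1), c ^ k) * T ∧
      |q (i + 1) j - y (i + 1) j| ≤ (∑ k ∈ Finset.range (i + j + 1), c ^ k) * T) ∧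
    (c < 1 → ∃ K : ℝ, ∀ i j : ℕ,
      |p i (j + 1) - x i (j + 1)| ≤ K ∧ |q (i + 1) j - y (i + 1) j| ≤ K) := by
  set S : ℕ → ℝ := fun n => (∑ k ∈ Finset.range n, c ^ k) * T + (max c 1) ^ n * I with hS
  have hc1 : (1:ℝ) ≤ max c 1 := le_max_right _ _
  have hcle : c ≤ max c 1 := le_max_left _ _
  have hcpos : 0 ≤ max c 1 := le_trans zero_le_one hc1
  have hIle : ∀ n, I ≤ S n := by
    intro n
    have h1 : (1:ℝ) ≤ (max c 1) ^ n := one_le_pow₀ hc1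
    have h2 : I ≤ (max c 1) ^ n * I := le_mul_of_one_le_left hI h1
    have h3 : 0 ≤ (∑ k ∈ Finset.range n, c ^ k) * T :=
      mul_nonneg (Finset.sum_nonneg fun k _ => pow_nonneg hc k) hT
    simp only [hS]; linarith
  have hstep : ∀ n, c * S n + T ≤ S (n + 1) := by
    intro n
    simp only [hS]
    have h1 : c * ((∑ k ∈ Finset.range n, c ^ k) * T)
        = (∑ k ∈ Finset.range n, c ^ (k + 1)) * T := by
      rw [← mul_assoc, Finset.mul_sum]
      simp [pow_succ']
    have h2 : (∑ k ∈ Finset.range n, c ^ (k + 1)) + 1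
        = ∑ k ∈ Finset.range (n + 1), c ^ k := by
      rw [Finset.sum_range_succ' (fun k => c ^ k) n]
      simp
    have h3 : c * ((max c 1) ^ n * I) ≤ (max c 1) ^ (n + 1) * I := by
      rw [pow_succ']
      have := mul_le_mul_of_nonneg_right
        (mul_le_mul_of_nonneg_right hcle (pow_nonneg hcpos n)) hI
      linarith [this]
    have h4 : c * ((∑ k ∈ Finset.range n, c ^ k) * T) + T
        = (∑ k ∈ Finset.range (n + 1), c ^ k) * T := by
      rw [h1, ← h2]; ring
    linarith [h3, h4.le, h4.ge]
  have key : ∀ n, ∀ i j : ℕ, i + j = n →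
      |p i j - x i j| ≤ S n ∧ |q i j - y i j| ≤ S n := by
    intro n
    induction n with
    | zero =>
      intro i j hij
      obtain ⟨hi, hj⟩ := Nat.add_eq_zero.mp hij
      subst hi; subst hj
      exact ⟨le_trans (hp0 0) (hIle 0), le_trans (hq0 0) (hIle 0)⟩
    | succ n ih =>
      intro i j hij
      constructor
      · cases j with
        | zero => exact le_trans (hp0 i) (hIle (n + 1))
        | succ j =>
          have hprev := ih i j (by omega)
          have hmx : c * max (|q i j - y i j|) (|p i j - x i j|) + T ≤ c * S n + T := by
            have := max_le hprev.2 hprev.1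
            nlinarith
          exact le_trans (hp i j) (le_trans hmx (hstep n))
      · cases i with
        | zero => exact le_trans (hq0 j) (hIle (n + 1))
        | succ i =>
          have hprev := ih i j (by omega)
          have hmx : c * max (|q i j - y i j|) (|p i j - x i j|) + T ≤ c * S n + T := by
            have := max_le hprev.2 hprev.1
            nlinarith
          exact le_trans (hq i j) (le_trans hmx (hstep n))
  have main : ∀ i j : ℕ,
      |p i (j + 1) - x i (j + 1)| ≤ S (i + j + 1) ∧
      |q (i + 1) j - y (i + 1) j| ≤ S (i + j + 1) := by
    intro i j
    exact ⟨(key (i + j + 1) i (j + 1) (by omega)).1,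
           (key (i + j + 1) (i + 1) j (by omega)).2⟩
  refine ⟨main, ?_, ?_⟩
  · intro hI0 i j
    have h := main i j
    simp only [hS, hI0, mul_zero, add_zero] at h
    exact h
  · intro hclt
    refine ⟨(1 - c)⁻¹ * T + I, fun i j => ?_⟩
    have hmax : max c 1 = 1 := max_eq_right hclt.le
    have hsumle : (∑ k ∈ Finset.range (i + j + 1), c ^ k) ≤ (1 - c)⁻¹ := by
      have h1c : 0 < 1 - c := by linarith
      rw [geom_sum_eq (by linarith : c ≠ 1)]
      rw [div_le_iff_of_neg (by linarith : c - 1 < 0)]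
      have h0 : 0 ≤ c ^ (i + j + 1) := pow_nonneg hc _
      have he : (1 - c)⁻¹ * (c - 1) = -1 := by field_simp; ring
      rw [he]; linarith
    have h1 := main i j
    simp only [hS, hmax, one_pow, one_mul] at h1
    have h2 : (∑ k ∈ Finset.range (i + j + 1), c ^ k) * T ≤ (1 - c)⁻¹ * T :=
      mul_le_mul_of_nonneg_right hsumle hT
    exact ⟨by linarith [h1.1], by linarith [h1.2]⟩
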